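/- Path-by-path uniqueness from a Hölder flow (functional case): Let $\gamma : [0,1] \to \mathbb{R}^d$ be bounded measurable, $\alpha \in (0,1]$, $b \in L^1([0,1]; C^\alpha(\mathbb{R}^d;\mathbb{R}^d))$ (globally, i.e. $w(s,t) := \int_s^t \|b_r\|_{C^\alpha} dr$ is finite and continuous). Suppose the ODE $y_t = y_0 + \int_0^t b_r(y_r) dr + \gamma_t$ admits a semiflow $\Phi$ that is globally $\beta$-Hölder continuous in space, uniformly in times, with exponent $\beta \in (0,1]$ satisfying $\beta(1+\alpha) > 1$. Then for every $0 \le S \le T \le 1$ and $y \in \mathbb{R}^d$, the unique solution on $[S,T]$ with initial condition $y$ is $t \mapsto \Phi_{S \to t}(y)$. -/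

import Mathlib

open Set MeasureTheory

set_option maxHeartbeats 1000000 in
/-- Path-by-path uniqueness from a Hölder continuous semiflow (functional case):
if the perturbed ODE `y_t = y_0 + ∫_0^t b_r(y_r) dr + γ_t` with `b_r` globally
`α`-Hölder in space (with `L¹` in time Hölder constants `C`) admits a semiflow `Φ`
that is globally `β`-Hölder in space uniformly in times, with `β(1+α) > 1`, then
every solution on `[S,T]` with initial condition `y` coincides with `Φ_{S→·}(y)`. -/
theorem stmt_6 {d : ℕ}
    (γ : ℝ → EuclideanSpace ℝ (Fin d))
    (b : ℝ → EuclideanSpace ℝ (Fin d) → EuclideanSpace ℝ (Fin d))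
    (C : ℝ → ℝ) (α β N : ℝ)
    (hα : α ∈ Ioc (0:ℝ) 1) (hβ : β ∈ Ioc (0:ℝ) 1)
    (hβα : 1 < β * (1 + α))
    (hγmeas : Measurable γ) (hγbdd : ∃ M, ∀ t, ‖γ t‖ ≤ M)
    (hC0 : ∀ t, 0 ≤ C t)
    (hCint : IntegrableOn C (Icc 0 1))
    (hb : ∀ t ∈ Icc (0:ℝ) 1, ∀ x y, ‖b t x - b t y‖ ≤ C t * ‖x - y‖ ^ α)
    (Φ : ℝ → ℝ → EuclideanSpace ℝ (Fin d) → EuclideanSpace ℝ (Fin d))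
    (hΦint : ∀ s t, 0 ≤ s → s ≤ t → t ≤ 1 → ∀ x,
      IntervalIntegrable (fun r => b r (Φ s r x)) volume s t)
    (hflow : ∀ s t, 0 ≤ s → s ≤ t → t ≤ 1 → ∀ x,
      Φ s t x = x + (∫ r in s..t, b r (Φ s r x)) + γ t - γ s)
    (hsemi : ∀ s r t, 0 ≤ s → s ≤ r → r ≤ t → t ≤ 1 → ∀ x,
      Φ s t x = Φ r t (Φ s r x))
    (hHolder : ∀ s t, 0 ≤ s → s ≤ t → t ≤ 1 → ∀ x y,
      ‖Φ s t x - Φ s t y‖ ≤ N * ‖x - y‖ ^ β)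
    (S T : ℝ) (hS : 0 ≤ S) (hST : S ≤ T) (hT : T ≤ 1)
    (y : EuclideanSpace ℝ (Fin d)) (z : ℝ → EuclideanSpace ℝ (Fin d))
    (hzint : IntervalIntegrable (fun r => b r (z r)) volume S T)
    (hz : ∀ t ∈ Icc S T, z t = y + (∫ r in S..t, b r (z r)) + γ t - γ S) :
    ∀ t ∈ Icc S T, z t = Φ S t y := by
  intro t ht
  obtain ⟨hSt, htT⟩ := ht
  have ht1 : t ≤ 1 := le_trans htT hT
  have h0t : 0 ≤ t := le_trans hS hSt
  obtain ⟨hα0, hα1⟩ := hα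
  obtain ⟨hβ0, hβ1⟩ := hβ
  set N' : ℝ := max N 0 with hN'
  have hN'0 : 0 ≤ N' := le_max_right _ _
  have hNN' : N ≤ N' := le_max_left _ _
  set θ : ℝ := β * (1 + α) with hθ
  have hθ1 : 1 < θ := hβα
  -- z S = y
  have hzS : z S = y := by
    have h := hz S ⟨le_refl S, hST⟩
    simpa using h
  -- integrability helpers
  have Cll : ∀ a c : ℝ, 0 ≤ a → a ≤ c → c ≤ 1 → IntervalIntegrable C volume a c := by
    intro a c ha hac hc1
    have : IntegrableOn C (uIcc a c) := hCint.mono_set (by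
      rw [uIcc_of_le hac]; exact Icc_subset_Icc ha hc1)
    exact this.intervalIntegrable
  have Izb : ∀ a c : ℝ, S ≤ a → a ≤ c → c ≤ T →
      IntervalIntegrable (fun r => b r (z r)) volume a c := by
    intro a c ha hac hc1
    exact hzint.mono_set (by
      rw [uIcc_of_le hac, uIcc_of_le hST]; exact Icc_subset_Icc ha hc1)
  -- key increment estimate
  have key : ∀ s s' : ℝ, S ≤ s → s ≤ s' → s' ≤ t →
      (∫ r in s..s', C r) ≤ 1/2 →
      ‖Φ s' t (z s') - Φ s t (z s)‖ ≤ N' * (∫ r in s..s', C r) ^ θ := by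
    intro s s' hSs hss' hs't hWhalf
    have h0s : 0 ≤ s := hS.trans hSs
    have h0s' : 0 ≤ s' := h0s.trans hss'
    have hs'T : s' ≤ T := hs't.trans htT
    have hs'1 : s' ≤ 1 := hs'T.trans hT
    set x := z s with hx
    set W : ℝ := ∫ r in s..s', C r with hW
    have hW0 : 0 ≤ W := intervalIntegral.integral_nonneg hss' (fun r _ => hC0 r)
    set ψ : ℝ → EuclideanSpace ℝ (Fin d) :=
      fun u => ∫ r in s..u, (b r (z r) - b r (Φ s r x)) with hψ
    have hint1 : IntervalIntegrable (fun r => b r (z r)) volume s s' :=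
      Izb s s' hSs hss' hs'T
    have hint2 : IntervalIntegrable (fun r => b r (Φ s r x)) volume s s' :=
      hΦint s s' h0s hss' hs'1 x
    -- the identity
    have hid : ∀ u, s ≤ u → u ≤ s' → z u - Φ s u x = ψ u := by
      intro u hsu hus'
      have huT : u ≤ T := hus'.trans hs'T
      have hu1 : u ≤ 1 := huT.trans hT
      have hI1 : IntervalIntegrable (fun r => b r (z r)) volume S s :=
        Izb S s le_rfl hSs (hss'.trans hs'T)
      have hI2 : IntervalIntegrable (fun r => b r (z r)) volume s u :=
        Izb s u hSs hsu huT
      have hIΦ : IntervalIntegrable (fun r => b r (Φ s r x)) volume s u :=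
        hΦint s u h0s hsu hu1 x
      have hadd := intervalIntegral.integral_add_adjacent_intervals hI1 hI2
      have hzu := hz u ⟨hSs.trans hsu, huT⟩
      have hzs := hz s ⟨hSs, hss'.trans hs'T⟩
      have hΦu := hflow s u h0s hsu hu1 x
      have hsub := intervalIntegral.integral_sub hI2 hIΦ
      calc z u - Φ s u x
          = (∫ r in s..u, b r (z r)) - ∫ r in s..u, b r (Φ s r x) := by
            rw [hzu, hΦu, hx, hzs, ← hadd]; abel
        _ = ψ u := by simp only [hψ]; exact hsub.symm
    -- continuity of ψ on [s,s']
    have hψcont : ContinuousOn ψ (Icc s s') := by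
      have h := intervalIntegral.continuousOn_primitive_interval'
        (μ := volume) (hint1.sub hint2) (left_mem_uIcc (a := s) (b := s'))
      rwa [uIcc_of_le hss'] at h
    -- sup of ‖ψ‖
    set A : ℝ := sSup ((fun u => ‖ψ u‖) '' Icc s s') with hA
    have hbdd : BddAbove ((fun u => ‖ψ u‖) '' Icc s s') :=
      (isCompact_Icc.image_of_continuousOn hψcont.norm).bddAbove
    have hψA : ∀ u ∈ Icc s s', ‖ψ u‖ ≤ A := fun u hu => le_csSup hbdd ⟨u, hu, rfl⟩
    have hA0 : 0 ≤ A := by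
      have h := hψA s ⟨le_rfl, hss'⟩
      have h2 : ψ s = 0 := by simp [hψ]
      rw [h2] at h; simpa using h
    -- main estimate
    have hest : ∀ u, s ≤ u → u ≤ s' → ‖ψ u‖ ≤ A ^ α * W := by
      intro u hsu hus'
      have huT : u ≤ T := hus'.trans hs'T
      have hu1 : u ≤ 1 := huT.trans hT
      have hIz : IntervalIntegrable (fun r => b r (z r)) volume s u :=
        Izb s u hSs hsu huT
      have hIΦ : IntervalIntegrable (fun r => b r (Φ s r x)) volume s u :=
        hΦint s u h0s hsu hu1 x
      have h1 : ‖ψ u‖ ≤ ∫ r in s..u, ‖b r (z r) - b r (Φ s r x)‖ :=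
        intervalIntegral.norm_integral_le_integral_norm hsu
      have h2 : (∫ r in s..u, ‖b r (z r) - b r (Φ s r x)‖)
          ≤ ∫ r in s..u, C r * A ^ α := by
        apply intervalIntegral.integral_mono_on hsu ((hIz.sub hIΦ).norm)
          ((Cll s u h0s hsu hu1).mul_const _)
        intro r hr
        have hr01 : r ∈ Icc (0:ℝ) 1 := ⟨h0s.trans hr.1, hr.2.trans hu1⟩
        have hbr := hb r hr01 (z r) (Φ s r x)
        have hzr : z r - Φ s r x = ψ r := hid r hr.1 (hr.2.trans hus')
        calc ‖b r (z r) - b r (Φ s r x)‖ ≤ C r * ‖z r - Φ s r x‖ ^ α := hbr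
          _ ≤ C r * A ^ α := by
              apply mul_le_mul_of_nonneg_left _ (hC0 r)
              rw [hzr]
              exact Real.rpow_le_rpow (norm_nonneg _)
                (hψA r ⟨hr.1, hr.2.trans hus'⟩) hα0.le
      have h3 : (∫ r in s..u, C r * A ^ α) = (∫ r in s..u, C r) * A ^ α :=
        intervalIntegral.integral_mul_const _ _
      have h4 : (∫ r in s..u, C r) ≤ W := by
        have hadd := intervalIntegral.integral_add_adjacent_intervals
          (Cll s u h0s hsu hu1) (Cll u s' (h0s.trans hsu) hus' hs'1)
        have hpos : 0 ≤ ∫ r in u..s', C r :=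
          intervalIntegral.integral_nonneg hus' (fun r _ => hC0 r)
        rw [hW]; linarith
      calc ‖ψ u‖ ≤ ∫ r in s..u, ‖b r (z r) - b r (Φ s r x)‖ := h1
        _ ≤ ∫ r in s..u, C r * A ^ α := h2
        _ = (∫ r in s..u, C r) * A ^ α := h3
        _ ≤ A ^ α * W := by
            rw [mul_comm]
            exact mul_le_mul_of_nonneg_left h4 (Real.rpow_nonneg hA0 α)
    have hAW : A ≤ A ^ α * W := by
      apply Real.sSup_le _ (mul_nonneg (Real.rpow_nonneg hA0 α) hW0)
      rintro v ⟨u, hu, rfl⟩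
      exact hest u hu.1 hu.2
    -- semiflow rewriting
    have hgoal0 : Φ s t (z s) = Φ s' t (Φ s s' x) := hsemi s s' t h0s hss' hs't ht1 x
    have hψs' : z s' - Φ s s' x = ψ s' := hid s' hss' le_rfl
    -- handle A = 0 case
    have hzero : A = 0 → ‖Φ s' t (z s') - Φ s t (z s)‖ ≤ N' * W ^ θ := by
      intro hA00
      have h1 : ‖ψ s'‖ ≤ 0 := hA00 ▸ hψA s' ⟨hss', le_rfl⟩
      have h2 : z s' = Φ s s' x := by
        have : z s' - Φ s s' x = 0 := by
          rw [hψs']; exact norm_le_zero_iff.mp h1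
        exact sub_eq_zero.mp this
      rw [hgoal0, h2, sub_self, norm_zero]
      exact mul_nonneg hN'0 (Real.rpow_nonneg hW0 θ)
    rcases eq_or_lt_of_le hα1 with hα1' | hα1'
    · -- α = 1
      apply hzero
      have hAW1 : A ≤ A * W := by
        have : A ^ α = A := by rw [hα1', Real.rpow_one]
        rw [this] at hAW; exact hAW
      nlinarith
    · -- α < 1
      rcases eq_or_lt_of_le hA0 with hA0' | hApos
      · exact hzero hA0'.symm
      · have h1α : (0:ℝ) < 1 - α := by linarith
        have hApowpos : 0 < A ^ α := Real.rpow_pos_of_pos hApos α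
        have h5 : A ^ (1 - α) ≤ W := by
          have he : A ^ (1 - α) = A / A ^ α := by
            rw [Real.rpow_sub hApos, Real.rpow_one]
          rw [he, div_le_iff₀ hApowpos, mul_comm]
          exact hAW
        have hWpos : 0 < W := lt_of_lt_of_le (Real.rpow_pos_of_pos hApos _) h5
        have hW1 : W ≤ 1 := by linarith
        have h6 : A ≤ W ^ (1 / (1 - α)) := by
          have h := Real.rpow_le_rpow (Real.rpow_nonneg hA0 _) h5
            (by positivity : (0:ℝ) ≤ 1 / (1 - α))
          rwa [← Real.rpow_mul hA0, mul_one_div, div_self h1α.ne', Real.rpow_one] at h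
        have h7 : ‖ψ s'‖ ≤ W ^ (1 / (1 - α)) := by
          have h := hest s' hss' le_rfl
          have h8 : A ^ α ≤ (W ^ (1/(1-α))) ^ α := Real.rpow_le_rpow hA0 h6 hα0.le
          have e1 : (W ^ (1/(1-α))) ^ α = W ^ (1/(1-α)*α) :=
            (Real.rpow_mul hWpos.le _ _).symm
          have e2 : W ^ (1/(1-α)*α) * W ^ (1:ℝ) = W ^ (1/(1-α)*α + 1) :=
            (Real.rpow_add hWpos _ _).symm
          have e3 : 1/(1-α)*α + 1 = 1/(1-α) := by field_simp; ring
          have h9 : (W ^ (1/(1-α))) ^ α * W = W ^ (1/(1-α)) := by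
            calc (W ^ (1/(1-α))) ^ α * W
                = W ^ (1/(1-α)*α) * W ^ (1:ℝ) := by rw [e1, Real.rpow_one]
              _ = W ^ (1/(1-α)*α + 1) := e2
              _ = W ^ (1/(1-α)) := by rw [e3]
          calc ‖ψ s'‖ ≤ A ^ α * W := h
            _ ≤ (W ^ (1/(1-α))) ^ α * W := mul_le_mul_of_nonneg_right h8 hW0
            _ = W ^ (1/(1-α)) := h9
        have hHo := hHolder s' t h0s' hs't ht1 (z s') (Φ s s' x)
        rw [hgoal0]
        calc ‖Φ s' t (z s') - Φ s' t (Φ s s' x)‖ ≤ N * ‖z s' - Φ s s' x‖ ^ β := hHo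
          _ ≤ N' * ‖ψ s'‖ ^ β := by
              rw [hψs']
              exact mul_le_mul_of_nonneg_right hNN' (Real.rpow_nonneg (norm_nonneg _) β)
          _ ≤ N' * (W ^ (1/(1-α))) ^ β :=
              mul_le_mul_of_nonneg_left
                (Real.rpow_le_rpow (norm_nonneg _) h7 hβ0.le) hN'0
          _ = N' * W ^ (1/(1-α) * β) := by rw [← Real.rpow_mul hWpos.le]
          _ ≤ N' * W ^ θ := by
              apply mul_le_mul_of_nonneg_left _ hN'0
              apply Real.rpow_le_rpow_of_exponent_ge hWpos hW1
              have hle : (1+α) ≤ 1/(1-α) := by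
                rw [le_div_iff₀ h1α]; nlinarith
              calc θ = β * (1+α) := hθ
                _ ≤ β * (1/(1-α)) := mul_le_mul_of_nonneg_left hle hβ0.le
                _ = 1/(1-α) * β := mul_comm _ _
  -- conclude using partitions
  set D : ℝ := ‖Φ t t (z t) - Φ S t (z S)‖ with hD
  have hFt0 : 0 ≤ ∫ r in S..t, C r := intervalIntegral.integral_nonneg hSt (fun r _ => hC0 r)
  have hFcont : ContinuousOn (fun u => ∫ r in S..u, C r) (Icc S t) := by
    have h := intervalIntegral.continuousOn_primitive_interval'
      (μ := volume) (Cll S t hS hSt ht1) (left_mem_uIcc (a := S) (b := t))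
    rwa [uIcc_of_le hSt] at h
  have hFuc := isCompact_Icc.uniformContinuousOn_of_continuous hFcont
  have main : ∀ ε : ℝ, 0 < ε → ε ≤ 1/2 → D ≤ N' * ε ^ (θ - 1) * ∫ r in S..t, C r := by
    intro ε hε hε2
    obtain ⟨δ, hδ, hδε⟩ := Metric.uniformContinuousOn_iff.1 hFuc ε hε
    obtain ⟨n, hn⟩ := exists_nat_gt (max 1 ((t - S)/δ))
    have hn1 : (1:ℝ) < n := lt_of_le_of_lt (le_max_left _ _) hn
    have hn0 : (0:ℝ) < n := by linarith
    have hmesh : (t - S)/n < δ := by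
      rw [div_lt_iff₀ hn0]
      have h2 : (t - S)/δ < n := lt_of_le_of_lt (le_max_right _ _) hn
      calc t - S = ((t-S)/δ) * δ := by field_simp
        _ < n * δ := mul_lt_mul_of_pos_right h2 hδ
        _ = δ * n := mul_comm _ _
    set p : ℕ → ℝ := fun i => S + i * ((t - S)/n) with hp
    have hstep0 : 0 ≤ (t - S)/n := div_nonneg (by linarith) hn0.le
    have hdiff : ∀ i : ℕ, p (i+1) - p i = (t - S)/n := by
      intro i; simp only [hp]; push_cast; ring
    have hmono : ∀ i : ℕ, p i ≤ p (i+1) := fun i =>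
      sub_nonneg.mp (by rw [hdiff i]; exact hstep0)
    have hpmono : Monotone p := monotone_nat_of_le_succ hmono
    have hp0 : p 0 = S := by simp [hp]
    have hpn : p n = t := by
      have hcast : (n:ℝ) * ((t - S)/n) = t - S := by field_simp
      simp only [hp, hcast]; ring
    have hple : ∀ i : ℕ, i ≤ n → p i ∈ Icc S t := by
      intro i hi
      constructor
      · rw [← hp0]; exact hpmono (Nat.zero_le i)
      · rw [← hpn]; exact hpmono hi
    have hWi_le : ∀ i : ℕ, i < n → (∫ r in p i..p (i+1), C r) ≤ ε := by
      intro i hi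
      have hpi := hple i hi.le
      have hpi1 := hple (i+1) hi
      have hd : dist (p (i+1)) (p i) < δ := by
        rw [Real.dist_eq]
        have h := hdiff i
        rw [h, abs_of_nonneg hstep0]
        exact hmesh
      have h := hδε (p (i+1)) hpi1 (p i) hpi hd
      have hFi : (∫ r in p i..p (i+1), C r) =
          (∫ r in S..p (i+1), C r) - (∫ r in S..p i, C r) := by
        have hadd := intervalIntegral.integral_add_adjacent_intervals
          (Cll S (p i) hS hpi.1 (hpi.2.trans ht1))
          (Cll (p i) (p (i+1)) (hS.trans hpi.1) (hmono i) (hpi1.2.trans ht1))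
        linarith
      rw [hFi]
      calc (∫ r in S..p (i+1), C r) - (∫ r in S..p i, C r)
          ≤ |(∫ r in S..p (i+1), C r) - (∫ r in S..p i, C r)| := le_abs_self _
        _ = dist (∫ r in S..p (i+1), C r) (∫ r in S..p i, C r) := (Real.dist_eq _ _).symm
        _ ≤ ε := h.le
    have htele : Φ t t (z t) - Φ S t (z S) =
        ∑ i ∈ Finset.range n, (Φ (p (i+1)) t (z (p (i+1))) - Φ (p i) t (z (p i))) := by
      rw [Finset.sum_range_sub (fun i => Φ (p i) t (z (p i))) n, hpn, hp0]
    have hsum1 : D ≤ ∑ i ∈ Finset.range n,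
        N' * (∫ r in p i..p (i+1), C r) ^ θ := by
      rw [hD, htele]
      refine le_trans (norm_sum_le _ _) (Finset.sum_le_sum ?_)
      intro i hi
      have hi' := Finset.mem_range.1 hi
      have hpi := hple i hi'.le
      have hpi1 := hple (i+1) hi'
      exact key (p i) (p (i+1)) hpi.1 (hmono i) hpi1.2
        ((hWi_le i hi').trans hε2)
    have hsum2 : ∀ i ∈ Finset.range n, N' * (∫ r in p i..p (i+1), C r) ^ θ
        ≤ N' * ε ^ (θ-1) * (∫ r in p i..p (i+1), C r) := by
      intro i hi
      have hi' := Finset.mem_range.1 hi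
      set Wi := ∫ r in p i..p (i+1), C r with hWi
      have hWi0 : 0 ≤ Wi := intervalIntegral.integral_nonneg (hmono i) (fun r _ => hC0 r)
      rcases eq_or_lt_of_le hWi0 with h0 | hpos
      · rw [← h0, Real.zero_rpow (by linarith : θ ≠ 0), mul_zero, mul_zero]
      · have hsplit : Wi ^ θ = Wi ^ (θ-1) * Wi := by
          conv_lhs => rw [show θ = (θ-1) + 1 by ring]
          rw [Real.rpow_add hpos, Real.rpow_one]
        have h2 : Wi ^ (θ-1) ≤ ε ^ (θ-1) :=
          Real.rpow_le_rpow hWi0 (hWi_le i hi') (by linarith)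
        calc N' * Wi ^ θ = N' * Wi^(θ-1) * Wi := by rw [hsplit]; ring
          _ ≤ N' * ε^(θ-1) * Wi := by
            apply mul_le_mul_of_nonneg_right _ hWi0
            exact mul_le_mul_of_nonneg_left h2 hN'0
    have hsum3 : ∑ i ∈ Finset.range n, (∫ r in p i..p (i+1), C r) = ∫ r in S..t, C r := by
      have hcong : ∀ i ∈ Finset.range n, (∫ r in p i..p (i+1), C r) =
          (∫ r in S..p (i+1), C r) - (∫ r in S..p i, C r) := by
        intro i hi
        have hi' := Finset.mem_range.1 hi
        have hpi := hple i hi'.le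
        have hpi1 := hple (i+1) hi'
        have hadd := intervalIntegral.integral_add_adjacent_intervals
          (Cll S (p i) hS hpi.1 (hpi.2.trans ht1))
          (Cll (p i) (p (i+1)) (hS.trans hpi.1) (hmono i) (hpi1.2.trans ht1))
        linarith
      rw [Finset.sum_congr rfl hcong,
        Finset.sum_range_sub (fun i => ∫ r in S..p i, C r) n, hpn, hp0]
      simp
    calc D ≤ ∑ i ∈ Finset.range n, N' * (∫ r in p i..p (i+1), C r) ^ θ := hsum1
      _ ≤ ∑ i ∈ Finset.range n, N' * ε^(θ-1) * (∫ r in p i..p (i+1), C r) :=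
          Finset.sum_le_sum hsum2
      _ = N' * ε^(θ-1) * ∑ i ∈ Finset.range n, (∫ r in p i..p (i+1), C r) := by
          rw [Finset.mul_sum]
      _ = N' * ε^(θ-1) * ∫ r in S..t, C r := by rw [hsum3]
  have hD0 : D ≤ 0 := by
    set q : ℝ := (1/2 : ℝ) ^ (θ - 1) with hq
    have hq0 : 0 ≤ q := Real.rpow_nonneg (by norm_num) _
    have hq1 : q < 1 := Real.rpow_lt_one (by norm_num) (by norm_num) (by linarith)
    have hbound : ∀ k : ℕ, D ≤ (N' * ∫ r in S..t, C r) * q ^ (k+1) := by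
      intro k
      have hε : (0:ℝ) < (1/2:ℝ) ^ (k+1) := by positivity
      have hε2 : ((1/2:ℝ)) ^ (k+1) ≤ 1/2 := by
        calc ((1/2:ℝ)) ^ (k+1) ≤ (1/2:ℝ)^1 :=
              pow_le_pow_of_le_one (by norm_num) (by norm_num) (by omega)
          _ = 1/2 := pow_one _
      have h := main _ hε hε2
      have heq : ((1/2:ℝ) ^ (k+1)) ^ (θ - 1) = q ^ (k+1) := by
        rw [hq, ← Real.rpow_natCast ((1/2:ℝ)) (k+1), ← Real.rpow_mul (by norm_num),
          mul_comm, Real.rpow_mul (by norm_num), Real.rpow_natCast]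
      rw [heq] at h
      calc D ≤ N' * q^(k+1) * ∫ r in S..t, C r := h
        _ = (N' * ∫ r in S..t, C r) * q^(k+1) := by ring
    have hlim : Filter.Tendsto (fun k : ℕ => (N' * ∫ r in S..t, C r) * q ^ (k+1))
        Filter.atTop (nhds 0) := by
      have h1 : Filter.Tendsto (fun k : ℕ => q ^ k) Filter.atTop (nhds 0) :=
        tendsto_pow_atTop_nhds_zero_of_lt_one hq0 hq1
      have h2 := h1.comp (Filter.tendsto_add_atTop_nat 1)
      have h3 := h2.const_mul (N' * ∫ r in S..t, C r)
      simpa [Function.comp] using h3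
    exact ge_of_tendsto' hlim hbound
  have hDeq : Φ t t (z t) = Φ S t (z S) := by
    have hd0 : D = 0 := le_antisymm hD0 (norm_nonneg _)
    rw [hD] at hd0
    exact sub_eq_zero.mp (norm_eq_zero.mp hd0)
  have hΦtt : Φ t t (z t) = z t := by
    have h := hflow t t h0t le_rfl ht1 (z t)
    simpa using h
  calc z t = Φ t t (z t) := hΦtt.symm
    _ = Φ S t (z S) := hDeq
    _ = Φ S t y := by rw [hzS]
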